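/- Let α₁, ..., α_k be positive real numbers, each in the open interval (1/2, 2), whose product α₁·α₂···α_k also lies in (1/2, 2). Then there exists a permutation σ of {1, ..., k} such that for every ℓ with 1 ≤ ℓ ≤ k, the partial product α_{σ(1)}·α_{σ(2)}···α_{σ(ℓ)} lies in (1/2, 2). -/

import Mathlib

open Finset in
private lemma filter_succ_prod {n m : ℕ} (g : Fin (n + 1) → ℝ) :
    (∏ i ∈ Finset.univ.filter (fun i : Fin (n+1) => i.val < m + 1), g i)
      = g 0 * ∏ i ∈ Finset.univ.filter (fun i : Fin n => i.val < m), g i.succ := by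
  rw [Finset.prod_filter, Finset.prod_filter, Fin.prod_univ_succ]
  simp [Nat.succ_lt_succ_iff]

private lemma key_lemma : ∀ (n : ℕ) (f : Fin n → ℝ) (P : ℝ),
    P ∈ Set.Ioo (1 / 2 : ℝ) 2 → (∀ i, f i ∈ Set.Ioo (1 / 2 : ℝ) 2) →
    (P * ∏ i, f i) ∈ Set.Ioo (1 / 2 : ℝ) 2 →
    ∃ σ : Equiv.Perm (Fin n), ∀ m : ℕ,
      (P * ∏ i ∈ Finset.univ.filter (fun i => i.val < m), f (σ i)) ∈ Set.Ioo (1 / 2 : ℝ) 2 := by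
  intro n
  induction n with
  | zero =>
    intro f P hP _ _
    exact ⟨1, fun m => by simpa using hP⟩
  | succ n ih =>
    intro f P hP hf hPf
    have hfpos : ∀ i, (0:ℝ) < f i := fun i => lt_trans (by norm_num) (hf i).1
    have hPpos : (0:ℝ) < P := lt_trans (by norm_num) hP.1
    -- choose the index j to go first
    have hchoice : ∃ j : Fin (n+1), P * f j ∈ Set.Ioo (1 / 2 : ℝ) 2 := by
      rcases lt_or_ge P 1 with hP1 | hP1
      · by_cases hex : ∃ j, 1 ≤ f j
        · obtain ⟨j, hj⟩ := hex
          refine ⟨j, ?_, ?_⟩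
          · calc (1/2 : ℝ) < P := hP.1
              _ = P * 1 := (mul_one P).symm
              _ ≤ P * f j := by nlinarith
          · nlinarith [(hf j).2]
        · push_neg at hex
          refine ⟨0, ?_, ?_⟩
          · have hrest : ∏ i : Fin n, f ((0 : Fin (n+1)).succAbove i) ≤ 1 := by
              apply Finset.prod_le_one
              · exact fun i _ => le_of_lt (hfpos _)
              · exact fun i _ => le_of_lt (hex _)
            have hsplit : (∏ i, f i) = f 0 * ∏ i : Fin n, f ((0 : Fin (n+1)).succAbove i) :=
              Fin.prod_univ_succAbove f 0
            have h1 : (1/2 : ℝ) < P * (f 0 * ∏ i : Fin n, f ((0 : Fin (n+1)).succAbove i)) := by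
              rw [← hsplit]; exact hPf.1
            have hpos0 : (0:ℝ) < P * f 0 := mul_pos hPpos (hfpos 0)
            nlinarith
          · nlinarith [hfpos 0, hex 0]
      · by_cases hex : ∃ j, f j ≤ 1
        · obtain ⟨j, hj⟩ := hex
          refine ⟨j, ?_, ?_⟩
          · nlinarith [(hf j).1]
          · nlinarith [hfpos j, hP.2]
        · push_neg at hex
          refine ⟨0, ?_, ?_⟩
          · nlinarith [hfpos 0, hex 0]
          · have hrest : (1:ℝ) ≤ ∏ i : Fin n, f ((0 : Fin (n+1)).succAbove i) := by
              have := Finset.prod_le_prod (s := (Finset.univ : Finset (Fin n))) (f := fun _ : Fin n => (1:ℝ))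
                (g := fun i : Fin n => f ((0 : Fin (n+1)).succAbove i))
                (fun i _ => zero_le_one) (fun i _ => le_of_lt (hex _))
              simpa using this
            have hsplit : (∏ i, f i) = f 0 * ∏ i : Fin n, f ((0 : Fin (n+1)).succAbove i) :=
              Fin.prod_univ_succAbove f 0
            have h2 : P * (f 0 * ∏ i : Fin n, f ((0 : Fin (n+1)).succAbove i)) < 2 := by
              rw [← hsplit]; exact hPf.2
            have hpos0 : (0:ℝ) < P * f 0 := mul_pos hPpos (hfpos 0)
            nlinarith
    obtain ⟨j, hj⟩ := hchoice
    have hsplit : (∏ i, f i) = f j * ∏ i : Fin n, f (j.succAbove i) :=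
      Fin.prod_univ_succAbove f j
    have hrec : ((P * f j) * ∏ i : Fin n, f (j.succAbove i)) ∈ Set.Ioo (1/2 : ℝ) 2 := by
      rw [mul_assoc, ← hsplit]; exact hPf
    obtain ⟨τ, hτ⟩ := ih (fun i => f (j.succAbove i)) (P * f j) hj
      (fun i => hf _) hrec
    -- build the permutation of Fin (n+1): 0 ↦ j, i.succ ↦ j.succAbove (τ i)
    refine ⟨(finSuccEquiv' (0 : Fin (n+1))).trans
      ((Equiv.optionCongr τ).trans (finSuccEquiv' j).symm), ?_⟩
    intro m
    set σ : Equiv.Perm (Fin (n+1)) := (finSuccEquiv' (0 : Fin (n+1))).trans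
      ((Equiv.optionCongr τ).trans (finSuccEquiv' j).symm) with hσ
    have hσ0 : σ 0 = j := by simp [hσ]
    have hσs : ∀ i : Fin n, σ i.succ = j.succAbove (τ i) := by
      intro i
      simp only [hσ, Equiv.trans_apply, Equiv.optionCongr_apply]
      rw [← Fin.zero_succAbove, finSuccEquiv'_succAbove, Option.map_some,
        ← finSuccEquiv'_succAbove j (τ i), Equiv.symm_apply_apply]
    match m with
    | 0 =>
      have he : Finset.univ.filter (fun i : Fin (n+1) => i.val < 0) = ∅ := by
        apply Finset.filter_false_of_mem
        exact fun i _ => Nat.not_lt_zero _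
      rw [he, Finset.prod_empty, mul_one]
      exact hP
    | m + 1 =>
      have := hτ m
      rw [filter_succ_prod (fun i => f (σ i)), hσ0]
      have hprodeq : (∏ i ∈ Finset.univ.filter (fun i : Fin n => i.val < m), f (σ i.succ))
          = ∏ i ∈ Finset.univ.filter (fun i : Fin n => i.val < m), f (j.succAbove (τ i)) :=
        Finset.prod_congr rfl (fun i _ => by rw [hσs i])
      rw [hprodeq, ← mul_assoc]
      exact this

theorem stmt_5 (k : ℕ) (α : Fin k → ℝ)
    (hα : ∀ i, α i ∈ Set.Ioo (1 / 2 : ℝ) 2)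
    (hprod : (∏ i, α i) ∈ Set.Ioo (1 / 2 : ℝ) 2) :
    ∃ σ : Equiv.Perm (Fin k), ∀ ℓ : Fin k,
      (∏ i ∈ Finset.univ.filter (fun i => i ≤ ℓ), α (σ i)) ∈ Set.Ioo (1 / 2 : ℝ) 2 := by
  have h1 : (1 : ℝ) ∈ Set.Ioo (1/2 : ℝ) 2 := by norm_num
  obtain ⟨σ, hσ⟩ := key_lemma k α 1 h1 hα (by simpa using hprod)
  refine ⟨σ, fun ℓ => ?_⟩
  have := hσ (ℓ.val + 1)
  have hfilter : Finset.univ.filter (fun i : Fin k => i ≤ ℓ)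
      = Finset.univ.filter (fun i : Fin k => i.val < ℓ.val + 1) := by
    apply Finset.filter_congr
    intro i _
    rw [Fin.le_def]
    exact Nat.lt_succ_iff.symm
  rw [hfilter]
  rw [one_mul] at this
  exact this
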